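/- Let n be a positive integer. For all functions f and g in the complex linear span of {e_j : j ∈ Λ_n}, one has (1/(2n²)) · Σ_{k ∈ X_n} f(k/(2n)) · conj(g(k/(2n))) = ∫_{[−1/2,1/2]²} f(x) · conj(g(x)) dx. -/

import Mathlib

open MeasureTheory Complex

attribute [local instance] Classical.propDecidable

/-- The exponential e_k(x) = exp(2 pi i (k1 x1 + k2 x2)). -/
noncomputable def e2 (k : ℤ × ℤ) (x : ℝ × ℝ) : ℂ :=
  Complex.exp (2 * Real.pi * Complex.I * ((k.1 : ℂ) * x.1 + (k.2 : ℂ) * x.2))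

/-- The point k/(2n) in the plane. -/
noncomputable def pt2 (n : ℕ) (k : ℤ × ℤ) : ℝ × ℝ :=
  ((k.1 : ℝ) / (2 * n), (k.2 : ℝ) / (2 * n))

/-- Λ_n = {j : -n ≤ j1+j2 < n and -n ≤ j2-j1 < n}. -/
noncomputable def Lam (n : ℕ) : Finset (ℤ × ℤ) :=
  (Finset.Icc (-(n : ℤ), -(n : ℤ)) ((n : ℤ), (n : ℤ))).filter
    fun j => -(n : ℤ) ≤ j.1 + j.2 ∧ j.1 + j.2 < (n : ℤ) ∧
      -(n : ℤ) ≤ j.2 - j.1 ∧ j.2 - j.1 < (n : ℤ)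

/-- X_n = {k : k1 ≡ k2 (mod 2), -n ≤ k_i < n}. -/
noncomputable def X2 (n : ℕ) : Finset (ℤ × ℤ) :=
  (Finset.Icc (-(n : ℤ), -(n : ℤ)) ((n : ℤ), (n : ℤ))).filter
    fun k => k.1 % 2 = k.2 % 2 ∧ k.1 < (n : ℤ) ∧ k.2 < (n : ℤ)

lemma geomT (n : ℕ) (hn : 0 < n) (a : ℤ) :
    ∑ k ∈ Finset.Ico (-(n:ℤ)) n, (Complex.exp (Real.pi * Complex.I * a / n)) ^ k
      = if (2*(n:ℤ)) ∣ a then (2*n : ℂ) else 0 := by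
  set z : ℂ := Complex.exp (Real.pi * Complex.I * a / n) with hz
  have hn' : (n:ℂ) ≠ 0 := Nat.cast_ne_zero.mpr hn.ne'
  have hπI : (Real.pi : ℂ) * Complex.I ≠ 0 :=
    mul_ne_zero (by exact_mod_cast Real.pi_ne_zero) Complex.I_ne_zero
  have hz0 : z ≠ 0 := Complex.exp_ne_zero _
  have hre : ∑ k ∈ Finset.Ico (-(n:ℤ)) n, z ^ k
      = ∑ i ∈ Finset.range (2*n), z ^ (-(n:ℤ)) * z ^ i := by
    refine Finset.sum_nbij' (fun k => (k + n).toNat) (fun i => (i : ℤ) - n) ?_ ?_ ?_ ?_ ?_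
    · intro k hk
      simp only [Finset.mem_Ico] at hk
      simp only [Finset.mem_range]
      omega
    · intro i hi
      simp only [Finset.mem_range] at hi
      simp only [Finset.mem_Ico]
      omega
    · intro k hk; simp only [Finset.mem_Ico] at hk; omega
    · intro i hi; simp only [Finset.mem_range] at hi; omega
    · intro k hk
      simp only [Finset.mem_Ico] at hk
      rw [← zpow_natCast z, ← zpow_add₀ hz0]
      congr 1
      omega
  by_cases h : (2*(n:ℤ)) ∣ a
  · obtain ⟨b, rfl⟩ := h
    have hz1 : z = 1 := by
      rw [hz]
      have : (Real.pi : ℂ) * Complex.I * ((2*(n:ℤ):ℤ) * b : ℤ) / n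
          = b * (2 * Real.pi * Complex.I) := by push_cast; field_simp
      rw [this, Complex.exp_int_mul_two_pi_mul_I]
    rw [if_pos ⟨b, rfl⟩, hz1]
    simp only [one_zpow, Finset.sum_const, nsmul_eq_mul, mul_one, Int.card_Ico]
    have h2 : ((n:ℤ) - -(n:ℤ)).toNat = 2*n := by omega
    rw [h2]; push_cast; ring
  · rw [if_neg h, hre]
    have hz1 : z ≠ 1 := by
      intro hz1
      rw [hz, Complex.exp_eq_one_iff] at hz1
      obtain ⟨m, hm⟩ := hz1
      apply h
      refine ⟨m, ?_⟩
      have hc : (Real.pi : ℂ) * Complex.I * a = (Real.pi : ℂ) * Complex.I * (2 * n * m) := by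
        field_simp at hm
        linear_combination (Real.pi * Complex.I) * hm
      have := mul_left_cancel₀ hπI hc
      exact_mod_cast this
    rw [← Finset.mul_sum, geom_sum_eq hz1]
    have hz2n : z ^ (2*n) = 1 := by
      rw [hz, ← Complex.exp_nat_mul]
      have : (2*n : ℕ) * ((Real.pi : ℂ) * Complex.I * a / n) = a * (2 * Real.pi * Complex.I) := by
        push_cast; field_simp
      rw [this, Complex.exp_int_mul_two_pi_mul_I]
    rw [hz2n]
    simp

lemma e2_pt (n : ℕ) (hn : 0 < n) (j k : ℤ × ℤ) :
    e2 j (pt2 n k) = (Complex.exp (Real.pi * Complex.I * j.1 / n)) ^ k.1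
      * (Complex.exp (Real.pi * Complex.I * j.2 / n)) ^ k.2 := by
  have hn' : (n:ℂ) ≠ 0 := Nat.cast_ne_zero.mpr hn.ne'
  rw [e2, pt2]
  rw [← Complex.exp_int_mul, ← Complex.exp_int_mul, ← Complex.exp_add]
  congr 1
  push_cast
  field_simp

lemma star_e2 (l : ℤ × ℤ) (x : ℝ × ℝ) : star (e2 l x) = e2 (-l) x := by
  rw [e2, e2, show (star (Complex.exp (2 * Real.pi * Complex.I * ((l.1 : ℂ) * x.1 + (l.2 : ℂ) * x.2))) : ℂ)
      = (starRingEnd ℂ) (Complex.exp (2 * Real.pi * Complex.I * ((l.1 : ℂ) * x.1 + (l.2 : ℂ) * x.2))) from rfl,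
    ← Complex.exp_conj]
  congr 1
  simp only [map_mul, map_add, Complex.conj_I, Complex.conj_ofReal, map_ofNat,
    map_intCast, Prod.fst_neg, Prod.snd_neg]
  push_cast
  ring

lemma e2_mul (j l : ℤ × ℤ) (x : ℝ × ℝ) : e2 j x * e2 l x = e2 (j + l) x := by
  rw [e2, e2, e2, ← Complex.exp_add]
  congr 1
  simp only [Prod.fst_add, Prod.snd_add]
  push_cast
  ring

lemma X2_eq (n : ℕ) : X2 n
    = (Finset.Ico (-(n:ℤ)) (n:ℤ) ×ˢ Finset.Ico (-(n:ℤ)) (n:ℤ)).filter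
        (fun k => k.1 % 2 = k.2 % 2) := by
  ext k
  simp only [X2, Finset.mem_filter, Finset.mem_Icc, Finset.mem_product, Finset.mem_Ico,
    Prod.mk_le_mk, Prod.le_def]
  constructor
  · rintro ⟨⟨h1, h2⟩, h3, h4, h5⟩; exact ⟨⟨⟨h1.1, h4⟩, h1.2, h5⟩, h3⟩
  · rintro ⟨⟨⟨h1, h2⟩, h3, h4⟩, h5⟩; exact ⟨⟨⟨h1, h3⟩, le_of_lt h2, le_of_lt h4⟩, h5, h2, h4⟩

-- the ± combination of powers

lemma neg_pow_combo (z1 z2 : ℂ) (k : ℤ × ℤ) :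
    (if k.1 % 2 = k.2 % 2 then z1 ^ k.1 * z2 ^ k.2 else 0)
      = (z1 ^ k.1 * z2 ^ k.2 + (-z1) ^ k.1 * (-z2) ^ k.2) / 2 := by
  rcases Int.even_or_odd k.1 with h1 | h1 <;> rcases Int.even_or_odd k.2 with h2 | h2
  · rw [h1.neg_zpow, h2.neg_zpow, if_pos (by rw [Int.even_iff] at h1 h2; omega)]; ring
  · rw [h1.neg_zpow, h2.neg_zpow,
      if_neg (by rw [Int.even_iff] at h1; rw [Int.odd_iff] at h2; omega)]; ring
  · rw [h1.neg_zpow, h2.neg_zpow,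
      if_neg (by rw [Int.odd_iff] at h1; rw [Int.even_iff] at h2; omega)]; ring
  · rw [h1.neg_zpow, h2.neg_zpow, if_pos (by rw [Int.odd_iff] at h1 h2; omega)]; ring

lemma discOrth (n : ℕ) (hn : 0 < n) (j l : ℤ × ℤ) (hj : j ∈ Lam n) (hl : l ∈ Lam n) :
    ∑ k ∈ X2 n, e2 j (pt2 n k) * star (e2 l (pt2 n k))
      = if j = l then (2 * (n:ℂ)^2) else 0 := by
  have hn' : (0:ℤ) < n := by exact_mod_cast hn
  set m : ℤ × ℤ := j - l with hm
  set z1 : ℂ := Complex.exp (Real.pi * Complex.I * m.1 / n) with hz1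
  set z2 : ℂ := Complex.exp (Real.pi * Complex.I * m.2 / n) with hz2
  -- pointwise term
  have hterm : ∀ k : ℤ × ℤ, e2 j (pt2 n k) * star (e2 l (pt2 n k)) = z1 ^ k.1 * z2 ^ k.2 := by
    intro k
    rw [star_e2, e2_mul, e2_pt n hn]
    have h1 : (j + -l).1 = m.1 := by simp [hm]; omega
    have h2 : (j + -l).2 = m.2 := by simp [hm]; omega
    rw [h1, h2]
  -- rewrite sum
  calc ∑ k ∈ X2 n, e2 j (pt2 n k) * star (e2 l (pt2 n k))
      = ∑ k ∈ (Finset.Ico (-(n:ℤ)) (n:ℤ) ×ˢ Finset.Ico (-(n:ℤ)) (n:ℤ)),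
          (if k.1 % 2 = k.2 % 2 then z1 ^ k.1 * z2 ^ k.2 else 0) := by
        rw [X2_eq, Finset.sum_filter]
        exact Finset.sum_congr rfl fun k _ => by rw [hterm k]
    _ = ((∑ a ∈ Finset.Ico (-(n:ℤ)) (n:ℤ), z1 ^ a) * (∑ b ∈ Finset.Ico (-(n:ℤ)) (n:ℤ), z2 ^ b)
        + (∑ a ∈ Finset.Ico (-(n:ℤ)) (n:ℤ), (-z1) ^ a) * (∑ b ∈ Finset.Ico (-(n:ℤ)) (n:ℤ), (-z2) ^ b)) / 2 := by
        rw [Finset.sum_product]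
        conv_rhs => rw [Finset.sum_mul_sum, Finset.sum_mul_sum, ← Finset.sum_add_distrib,
          Finset.sum_div]
        refine Finset.sum_congr rfl fun a _ => ?_
        rw [← Finset.sum_add_distrib, Finset.sum_div]
        exact Finset.sum_congr rfl fun b _ => neg_pow_combo z1 z2 (a, b)
    _ = if j = l then (2 * (n:ℂ)^2) else 0 := by
        have hnc : (n:ℂ) ≠ 0 := Nat.cast_ne_zero.mpr hn.ne'
        have hneg : ∀ a : ℤ, -Complex.exp (Real.pi * Complex.I * a / n)
            = Complex.exp (Real.pi * Complex.I * ((a + n : ℤ)) / n) := by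
          intro a
          have : (Real.pi:ℂ) * Complex.I * ((a + n : ℤ)) / n
              = Real.pi * Complex.I * a / n + Real.pi * Complex.I := by
            push_cast; field_simp
          rw [this, Complex.exp_add, Complex.exp_pi_mul_I]
          ring
        rw [hz1, hz2, hneg m.1, hneg m.2, geomT n hn, geomT n hn, geomT n hn, geomT n hn]
        -- extract bounds from Lam membership
        simp only [Lam, Finset.mem_filter, Finset.mem_Icc, Prod.le_def] at hj hl
        obtain ⟨-, hj1, hj2, hj3, hj4⟩ := hj
        obtain ⟨-, hl1, hl2, hl3, hl4⟩ := hl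
        by_cases hjl : j = l
        · subst hjl
          have hm0 : m = 0 := by rw [hm]; ring
          rw [if_pos rfl, hm0]
          have hndvd : ¬ (2*(n:ℤ)) ∣ ((0:ℤ×ℤ).1 + n) := by
            simp only [Prod.fst_zero, zero_add]
            intro hdvd
            have := Int.le_of_dvd hn' hdvd
            omega
          rw [if_pos (by simp), if_pos (by simp), if_neg hndvd]
          ring
        · rw [if_neg hjl]
          have hs : m.1 + m.2 = (j.1 + j.2) - (l.1 + l.2) := by rw [hm]; simp; ring
          have hd : m.2 - m.1 = (j.2 - j.1) - (l.2 - l.1) := by rw [hm]; simp; ring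
          have habs1 : |m.1 + m.2| < 2*(n:ℤ) := by rw [hs, abs_lt]; omega
          have habs2 : |m.2 - m.1| < 2*(n:ℤ) := by rw [hd, abs_lt]; omega
          have hmm1 : m.1 = j.1 - l.1 := by simp [hm]
          have hmm2 : m.2 = j.2 - l.2 := by simp [hm]
          have not12 : ¬((2*(n:ℤ)) ∣ m.1 ∧ (2*(n:ℤ)) ∣ m.2) := by
            rintro ⟨h1, h2⟩
            have e1 : m.1 + m.2 = 0 := Int.eq_zero_of_abs_lt_dvd (dvd_add h1 h2) habs1
            have e2 : m.2 - m.1 = 0 := Int.eq_zero_of_abs_lt_dvd (dvd_sub h2 h1) habs2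
            exact hjl (by rw [Prod.ext_iff]; omega)
          have not34 : ¬((2*(n:ℤ)) ∣ (m.1 + n) ∧ (2*(n:ℤ)) ∣ (m.2 + n)) := by
            rintro ⟨h3, h4⟩
            have d1 : (2*(n:ℤ)) ∣ (m.1 + m.2) := by
              obtain ⟨c, hc⟩ := dvd_add h3 h4
              exact ⟨c - 1, by linear_combination hc⟩
            have d2 : (2*(n:ℤ)) ∣ (m.2 - m.1) := by
              obtain ⟨c, hc⟩ := dvd_sub h4 h3
              exact ⟨c, by linear_combination hc⟩
            have e1 : m.1 + m.2 = 0 := Int.eq_zero_of_abs_lt_dvd d1 habs1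
            have e2 : m.2 - m.1 = 0 := Int.eq_zero_of_abs_lt_dvd d2 habs2
            have hm1 : m.1 = 0 := by omega
            rw [hm1, zero_add] at h3
            have := Int.le_of_dvd hn' h3
            omega
          have A : (if (2*(n:ℤ)) ∣ m.1 then ((2*n : ℂ)) else 0)
              * (if (2*(n:ℤ)) ∣ m.2 then ((2*n : ℂ)) else 0) = 0 := by
            by_cases h1 : (2*(n:ℤ)) ∣ m.1
            · rw [if_neg (fun h2 => not12 ⟨h1, h2⟩)]; ring
            · rw [if_neg h1]; ring
          have B : (if (2*(n:ℤ)) ∣ (m.1 + n) then ((2*n : ℂ)) else 0)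
              * (if (2*(n:ℤ)) ∣ (m.2 + n) then ((2*n : ℂ)) else 0) = 0 := by
            by_cases h3 : (2*(n:ℤ)) ∣ (m.1 + n)
            · rw [if_neg (fun h4 => not34 ⟨h3, h4⟩)]; ring
            · rw [if_neg h3]; ring
          rw [A, B]
          norm_num

lemma oneD (a : ℤ) :
    ∫ t in Set.Icc (-(1:ℝ)/2) (1/2), Complex.exp ((2*Real.pi*Complex.I*a) * t)
      = if a = 0 then 1 else 0 := by
  rw [MeasureTheory.integral_Icc_eq_integral_Ioc,
    ← intervalIntegral.integral_of_le (by norm_num : (-(1:ℝ)/2) ≤ 1/2)]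
  by_cases h : a = 0
  · subst h
    simp
    norm_num
  · rw [if_neg h]
    have hc : (2*(Real.pi:ℂ)*Complex.I*a) ≠ 0 := by
      apply mul_ne_zero
      apply mul_ne_zero
      apply mul_ne_zero
      · norm_num
      · exact_mod_cast Real.pi_ne_zero
      · exact Complex.I_ne_zero
      · exact_mod_cast h
    rw [integral_exp_mul_complex hc]
    have h1 : (2*(Real.pi:ℂ)*Complex.I*a) * ((1:ℝ)/2 : ℝ) = a * (Real.pi * Complex.I) := by
      push_cast; ring
    have h2 : (2*(Real.pi:ℂ)*Complex.I*a) * ((-(1:ℝ)/2 : ℝ)) = ((-a : ℤ) : ℂ) * (Real.pi * Complex.I) := by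
      push_cast; ring
    rw [h1, h2, Complex.exp_int_mul, Complex.exp_int_mul, Complex.exp_pi_mul_I]
    rw [zpow_neg]
    rw [div_eq_zero_iff]
    left
    rw [← inv_zpow]
    norm_num

lemma intOrth (j l : ℤ × ℤ) :
    (∫ x in Set.Icc ((-(1:ℝ)/2, -(1:ℝ)/2)) (((1:ℝ)/2, (1:ℝ)/2)), e2 j x * star (e2 l x))
      = if j = l then 1 else 0 := by
  have hterm : ∀ x : ℝ × ℝ, e2 j x * star (e2 l x)
      = Complex.exp ((2*Real.pi*Complex.I*((j.1 - l.1 : ℤ) : ℂ)) * x.1)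
        * Complex.exp ((2*Real.pi*Complex.I*((j.2 - l.2 : ℤ) : ℂ)) * x.2) := by
    intro x
    rw [star_e2, e2_mul, e2, ← Complex.exp_add]
    congr 1
    simp only [Prod.fst_add, Prod.snd_add, Prod.fst_neg, Prod.snd_neg]
    push_cast
    ring
  simp only [hterm]
  rw [Set.Icc_prod_eq, MeasureTheory.Measure.volume_eq_prod, MeasureTheory.setIntegral_prod_mul
    (fun t : ℝ => Complex.exp ((2*Real.pi*Complex.I*((j.1 - l.1 : ℤ) : ℂ)) * t))
    (fun t : ℝ => Complex.exp ((2*Real.pi*Complex.I*((j.2 - l.2 : ℤ) : ℂ)) * t))]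
  rw [oneD, oneD]
  by_cases hjl : j = l
  · subst hjl
    simp
  · rw [if_neg hjl]
    have : j.1 - l.1 ≠ 0 ∨ j.2 - l.2 ≠ 0 := by
      by_contra hcon
      push_neg at hcon
      exact hjl (by rw [Prod.ext_iff]; omega)
    rcases this with h | h
    · rw [if_neg h]; ring
    · rw [if_neg h]; ring

lemma cont_e2 (k : ℤ × ℤ) : Continuous (e2 k) := by
  unfold e2
  fun_prop

lemma span_rep (n : ℕ) (f : ℝ × ℝ → ℂ)
    (hf : f ∈ Submodule.span ℂ (e2 '' (Lam n : Set (ℤ × ℤ)))) :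
    ∃ c : ℤ × ℤ → ℂ, ∀ x, f x = ∑ j ∈ Lam n, c j * e2 j x := by
  rw [Finsupp.mem_span_image_iff_linearCombination] at hf
  obtain ⟨c, hsupp, hfc⟩ := hf
  refine ⟨c, fun x => ?_⟩
  rw [← hfc]
  rw [Finsupp.linearCombination_apply, Finsupp.sum]
  have hsub : c.support ⊆ Lam n := by
    intro a ha
    exact hsupp ha
  rw [Finset.sum_apply]
  rw [Finset.sum_subset hsub (fun j _ hj => by
    rw [Finsupp.notMem_support_iff.mp hj]; simp)]
  exact Finset.sum_congr rfl fun j _ => by simp [smul_eq_mul]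

theorem discrete_inner_product_eq_integral_2d (n : ℕ) (hn : 0 < n)
    (f g : ℝ × ℝ → ℂ)
    (hf : f ∈ Submodule.span ℂ (e2 '' (Lam n : Set (ℤ × ℤ))))
    (hg : g ∈ Submodule.span ℂ (e2 '' (Lam n : Set (ℤ × ℤ)))) :
    (1 / (2 * (n : ℂ) ^ 2)) * ∑ k ∈ X2 n, f (pt2 n k) * star (g (pt2 n k))
      = ∫ x in Set.Icc ((-(1:ℝ)/2, -(1:ℝ)/2)) (((1:ℝ)/2, (1:ℝ)/2)), f x * star (g x) := by
  obtain ⟨c, hc⟩ := span_rep n f hf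
  obtain ⟨d, hd⟩ := span_rep n g hg
  have h2n2 : (2 * (n:ℂ)^2) ≠ 0 := by
    apply mul_ne_zero; norm_num
    exact pow_ne_zero _ (Nat.cast_ne_zero.mpr hn.ne')
  have hprod : ∀ x : ℝ × ℝ, f x * star (g x)
      = ∑ j ∈ Lam n, ∑ l ∈ Lam n, (c j * star (d l)) * (e2 j x * star (e2 l x)) := by
    intro x
    rw [hc x, hd x, star_sum]
    rw [Finset.sum_mul_sum]
    refine Finset.sum_congr rfl fun j _ => Finset.sum_congr rfl fun l _ => ?_
    rw [star_mul']
    ring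
  -- LHS
  have hL : (1 / (2 * (n : ℂ) ^ 2)) * ∑ k ∈ X2 n, f (pt2 n k) * star (g (pt2 n k))
      = ∑ j ∈ Lam n, c j * star (d j) := by
    have : ∑ k ∈ X2 n, f (pt2 n k) * star (g (pt2 n k))
        = ∑ j ∈ Lam n, ∑ l ∈ Lam n, (c j * star (d l))
            * ∑ k ∈ X2 n, e2 j (pt2 n k) * star (e2 l (pt2 n k)) := by
      simp only [hprod]
      rw [Finset.sum_comm]
      refine Finset.sum_congr rfl fun j _ => ?_
      rw [Finset.sum_comm]
      refine Finset.sum_congr rfl fun l _ => ?_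
      rw [Finset.mul_sum]
    rw [this]
    have : ∀ j ∈ Lam n, ∑ l ∈ Lam n, (c j * star (d l))
        * ∑ k ∈ X2 n, e2 j (pt2 n k) * star (e2 l (pt2 n k))
        = c j * star (d j) * (2 * (n:ℂ)^2) := by
      intro j hj
      rw [Finset.sum_eq_single j]
      · rw [discOrth n hn j j hj hj, if_pos rfl]
      · intro l hl hne
        rw [discOrth n hn j l hj hl, if_neg (fun h => hne h.symm), mul_zero]
      · intro hj'; exact absurd hj hj'
    rw [Finset.sum_congr rfl this, ← Finset.sum_mul]
    field_simp
    exact mul_div_cancel_left₀ _ (Nat.cast_ne_zero.mpr hn.ne' : (n:ℂ) ≠ 0)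
  -- RHS
  have hR : (∫ x in Set.Icc ((-(1:ℝ)/2, -(1:ℝ)/2)) (((1:ℝ)/2, (1:ℝ)/2)), f x * star (g x))
      = ∑ j ∈ Lam n, c j * star (d j) := by
    have hint : ∀ j l : ℤ × ℤ, IntegrableOn
        (fun x => (c j * star (d l)) * (e2 j x * star (e2 l x)))
        (Set.Icc ((-(1:ℝ)/2, -(1:ℝ)/2)) (((1:ℝ)/2, (1:ℝ)/2))) volume := by
      intro j l
      apply Continuous.integrableOn_Icc
      exact continuous_const.mul ((cont_e2 j).mul (cont_e2 l).star)
    calc (∫ x in Set.Icc ((-(1:ℝ)/2, -(1:ℝ)/2)) (((1:ℝ)/2, (1:ℝ)/2)), f x * star (g x))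
        = ∫ x in Set.Icc ((-(1:ℝ)/2, -(1:ℝ)/2)) (((1:ℝ)/2, (1:ℝ)/2)),
            ∑ j ∈ Lam n, ∑ l ∈ Lam n, (c j * star (d l)) * (e2 j x * star (e2 l x)) := by
          exact setIntegral_congr_fun measurableSet_Icc (fun x _ => hprod x)
      _ = ∑ j ∈ Lam n, ∑ l ∈ Lam n, (c j * star (d l))
            * ∫ x in Set.Icc ((-(1:ℝ)/2, -(1:ℝ)/2)) (((1:ℝ)/2, (1:ℝ)/2)), e2 j x * star (e2 l x) := by
          rw [MeasureTheory.integral_finset_sum _ (fun j _ =>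
            MeasureTheory.integrable_finset_sum _ (fun l _ => hint j l))]
          refine Finset.sum_congr rfl fun j _ => ?_
          rw [MeasureTheory.integral_finset_sum _ (fun l _ => hint j l)]
          refine Finset.sum_congr rfl fun l _ => ?_
          rw [MeasureTheory.integral_const_mul]
      _ = ∑ j ∈ Lam n, c j * star (d j) := by
          refine Finset.sum_congr rfl fun j hj => ?_
          rw [Finset.sum_eq_single j]
          · rw [intOrth j j, if_pos rfl, mul_one]
          · intro l hl hne
            rw [intOrth j l, if_neg (fun h => hne h.symm), mul_zero]
          · intro hj'; exact absurd hj hj'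
  rw [hL, hR]
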